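/- Let n, d, t be positive integers with d ≤ n and let ε ∈ (0,1). Let μ be a probability distribution on {0,1}^n such that for every choice of pairwise distinct indices i_1, …, i_d ∈ {1,…,n}, μ({v : v_{i_1} = 1 and v_{i_2} = ⋯ = v_{i_d} = 0}) = (4 + 2 ln(d · C(n,d)/ε)) / t. Let the rows s_1, …, s_t of a random t×n binary matrix S be drawn i.i.d. from μ, and for each j ∈ {1,…,n} let B_j = {k ∈ {1,…,t} : S_{kj} = 1}. Then the probability that there exist pairwise distinct indices i_1, …, i_d ∈ {1,…,n} with |B_{i_1} \ (B_{i_2} ∪ ⋯ ∪ B_{i_d})| ≤ 1 is at most ε. -/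

import Mathlib

lemma prod_ite_zero' {κ : Type*} (s : Finset κ) (P : κ → Prop) [DecidablePred P]
    [Decidable (∀ k ∈ s, P k)] (f : κ → ℝ) :
    ∏ k ∈ s, (if P k then f k else 0) = if ∀ k ∈ s, P k then ∏ k ∈ s, f k else 0 := by
  by_cases h : ∀ k ∈ s, P k
  · rw [if_pos h]; exact Finset.prod_congr rfl fun k hk => if_pos (h k hk)
  · rw [if_neg h]; push_neg at h; obtain ⟨k, hk, hPk⟩ := h
    exact Finset.prod_eq_zero hk (if_neg hPk)

lemma sum_indep' {X : Type*} [Fintype X] (t : ℕ) (μ : X → ℝ) (g : Fin t → X → Prop)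
    [∀ k, DecidablePred (g k)] [∀ S : Fin t → X, Decidable (∀ k, g k (S k))] :
    ∑ S : Fin t → X, (if ∀ k, g k (S k) then ∏ k, μ (S k) else 0)
      = ∏ k, ∑ x ∈ Finset.univ.filter (g k), μ x := by
  classical
  simp_rw [Finset.sum_filter]
  rw [Finset.prod_univ_sum, Fintype.piFinset_univ]
  refine Finset.sum_congr rfl fun S _ => ?_
  rw [prod_ite_zero' Finset.univ (fun k => g k (S k)) (fun k => μ (S k))]
  exact if_congr (by simp) rfl rfl

lemma class_bound' {X : Type*} [Fintype X] (t : ℕ) (μ : X → ℝ) (hμ0 : ∀ x, 0 ≤ μ x)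
    (hμ1 : ∑ x, μ x = 1) (bad : X → Prop) [DecidablePred bad] (p : ℝ)
    (hp : ∑ x ∈ Finset.univ.filter bad, μ x = p) :
    ∑ S : Fin t → X, (if (Finset.univ.filter fun k => bad (S k)).card ≤ 1 then ∏ k, μ (S k) else 0)
      ≤ (1 - p) ^ t + t * p * (1 - p) ^ (t - 1) := by
  have hw : ∀ S : Fin t → X, 0 ≤ ∏ k, μ (S k) := fun S => Finset.prod_nonneg fun k _ => hμ0 _
  have hqsum : ∑ x ∈ Finset.univ.filter (fun x => ¬ bad x), μ x = 1 - p := by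
    have h := Finset.sum_filter_add_sum_filter_not Finset.univ bad μ
    rw [hp, hμ1] at h; linarith
  have point : ∀ S : Fin t → X,
      (if (Finset.univ.filter fun k => bad (S k)).card ≤ 1 then ∏ k, μ (S k) else 0)
        ≤ (if ∀ k, ¬ bad (S k) then ∏ k, μ (S k) else 0)
          + ∑ k0 : Fin t, (if ∀ k, (if k = k0 then bad (S k) else ¬ bad (S k))
              then ∏ k, μ (S k) else 0) := by
    intro S
    have hA : (0:ℝ) ≤ if ∀ k, ¬ bad (S k) then ∏ k, μ (S k) else 0 := by
      split_ifs
      · exact hw S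
      · exact le_rfl
    have hB : (0:ℝ) ≤ ∑ k0 : Fin t, (if ∀ k, (if k = k0 then bad (S k) else ¬ bad (S k))
        then ∏ k, μ (S k) else 0) := by
      refine Finset.sum_nonneg fun k0 _ => ?_
      split_ifs
      · exact hw S
      · exact le_rfl
    by_cases hc : (Finset.univ.filter fun k => bad (S k)).card ≤ 1
    · rw [if_pos hc]
      rcases Nat.le_one_iff_eq_zero_or_eq_one.mp hc with h0 | h1
      · have hall : ∀ k, ¬ bad (S k) := by
          intro k hk
          have hm : k ∈ Finset.univ.filter fun k => bad (S k) :=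
            Finset.mem_filter.mpr ⟨Finset.mem_univ k, hk⟩
          rw [Finset.card_eq_zero] at h0
          simp [h0] at hm
        rw [if_pos hall]; linarith
      · obtain ⟨k0, hk0⟩ := Finset.card_eq_one.mp h1
        have hk0bad : bad (S k0) := by
          have : k0 ∈ Finset.univ.filter fun k => bad (S k) := by
            rw [hk0]; exact Finset.mem_singleton_self k0
          exact (Finset.mem_filter.mp this).2
        have hrest : ∀ k, k ≠ k0 → ¬ bad (S k) := by
          intro k hkne hk
          have : k ∈ Finset.univ.filter fun k => bad (S k) :=
            Finset.mem_filter.mpr ⟨Finset.mem_univ k, hk⟩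
          rw [hk0, Finset.mem_singleton] at this
          exact hkne this
        have hcond : ∀ k, (if k = k0 then bad (S k) else ¬ bad (S k)) := by
          intro k
          by_cases h : k = k0
          · rw [if_pos h, h]; exact hk0bad
          · rw [if_neg h]; exact hrest k h
        have h1' : (∏ k, μ (S k)) ≤ ∑ k0' : Fin t,
            (if ∀ k, (if k = k0' then bad (S k) else ¬ bad (S k)) then ∏ k, μ (S k) else 0) := by
          have hle := Finset.single_le_sum
            (f := fun k0' : Fin t => if ∀ k, (if k = k0' then bad (S k) else ¬ bad (S k))
              then ∏ k, μ (S k) else 0)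
            (fun k0' _ => by
              split_ifs
              · exact hw S
              · exact le_rfl)
            (Finset.mem_univ k0)
          simpa only [if_pos hcond] using hle
        linarith
    · rw [if_neg hc]; linarith
  calc ∑ S : Fin t → X, (if (Finset.univ.filter fun k => bad (S k)).card ≤ 1
          then ∏ k, μ (S k) else 0)
      ≤ ∑ S : Fin t → X, ((if ∀ k, ¬ bad (S k) then ∏ k, μ (S k) else 0)
          + ∑ k0 : Fin t, (if ∀ k, (if k = k0 then bad (S k) else ¬ bad (S k))
              then ∏ k, μ (S k) else 0)) := Finset.sum_le_sum fun S _ => point S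
    _ = (1 - p) ^ t + t * p * (1 - p) ^ (t - 1) := by
        rw [Finset.sum_add_distrib]
        congr 1
        · have h : (∑ S : Fin t → X, if ∀ k, ¬ bad (S k) then ∏ k, μ (S k) else 0)
              = ∏ _k : Fin t, ∑ x ∈ Finset.univ.filter (fun x => ¬ bad x), μ x :=
            sum_indep' t μ (fun _ x => ¬ bad x)
          rw [h, hqsum, Finset.prod_const, Finset.card_univ, Fintype.card_fin]
        · rw [Finset.sum_comm]
          have hinner : ∀ k0 : Fin t,
              (∑ S : Fin t → X, (if ∀ k, (if k = k0 then bad (S k) else ¬ bad (S k))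
                then ∏ k, μ (S k) else 0)) = p * (1 - p) ^ (t - 1) := by
            intro k0
            have h : (∑ S : Fin t → X, if ∀ k, (if k = k0 then bad (S k) else ¬ bad (S k))
                  then ∏ k, μ (S k) else 0)
                = ∏ k : Fin t, ∑ x ∈ Finset.univ.filter
                    (fun x => if k = k0 then bad x else ¬ bad x), μ x :=
              sum_indep' t μ (fun k x => if k = k0 then bad x else ¬ bad x)
            rw [h]
            have hfac : ∀ k : Fin t,
                (∑ x ∈ Finset.univ.filter (fun x => if k = k0 then bad x else ¬ bad x), μ x)
                  = if k = k0 then p else 1 - p := by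
              intro k
              by_cases hk : k = k0
              · rw [if_pos hk]
                have heq : Finset.univ.filter (fun x => if k = k0 then bad x else ¬ bad x)
                    = Finset.univ.filter bad :=
                  Finset.filter_congr (fun x _ => by simp [hk])
                rw [heq, hp]
              · rw [if_neg hk]
                have heq : Finset.univ.filter (fun x => if k = k0 then bad x else ¬ bad x)
                    = Finset.univ.filter (fun x => ¬ bad x) :=
                  Finset.filter_congr (fun x _ => by simp [hk])
                rw [heq, hqsum]
            rw [Finset.prod_congr rfl (fun k _ => hfac k),
              ← Finset.mul_prod_erase Finset.univ _ (Finset.mem_univ k0), if_pos rfl]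
            congr 1
            rw [Finset.prod_congr rfl (fun k hk => if_neg (Finset.mem_erase.mp hk).1),
              Finset.prod_const, Finset.card_erase_of_mem (Finset.mem_univ k0),
              Finset.card_univ, Fintype.card_fin]
          rw [Finset.sum_congr rfl fun k0 _ => hinner k0, Finset.sum_const, Finset.card_univ,
            Fintype.card_fin, nsmul_eq_mul]
          ring


lemma numeric_bound' (p : ℝ) (hp0 : 0 ≤ p) (hp1 : p ≤ 1) (t : ℕ) (ht : 1 ≤ t)
    (L : ℝ) (hL : 0 < L) (htp : (t : ℝ) * p = 4 + 2 * L) :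
    (1 - p) ^ t + t * p * (1 - p) ^ (t - 1) ≤ Real.exp (-L) := by
  have hq0 : (0:ℝ) ≤ 1 - p := by linarith
  have hq1 : 1 - p ≤ 1 := by linarith
  have h1 : (1 - p) ^ t ≤ (1 - p) ^ (t - 1) :=
    pow_le_pow_of_le_one hq0 hq1 (Nat.sub_le t 1)
  have h2 : (1 - p) ^ (t - 1) ≤ Real.exp (-p) ^ (t - 1) :=
    pow_le_pow_left₀ hq0 (by have := Real.add_one_le_exp (-p); linarith) _
  have h3 : Real.exp (-p) ^ (t - 1) = Real.exp (((t : ℝ) - 1) * (-p)) := by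
    rw [← Real.exp_nat_mul]
    congr 1
    rw [Nat.cast_sub ht]
    norm_num
  have h4 : ((t : ℝ) - 1) * (-p) ≤ -3 - 2 * L := by nlinarith
  have h5 : (1 - p) ^ (t - 1) ≤ Real.exp (-3 - 2 * L) := by
    calc (1 - p) ^ (t - 1) ≤ Real.exp (((t : ℝ) - 1) * (-p)) := h3 ▸ h2
      _ ≤ Real.exp (-3 - 2 * L) := Real.exp_le_exp.mpr h4
  have hqpow : (0:ℝ) ≤ (1 - p) ^ (t - 1) := pow_nonneg hq0 _
  have step : (1 - p) ^ t + t * p * (1 - p) ^ (t - 1) ≤ (5 + 2 * L) * Real.exp (-3 - 2 * L) := by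
    have : (1 - p) ^ t + t * p * (1 - p) ^ (t - 1) ≤ (1 + (4 + 2 * L)) * (1 - p) ^ (t - 1) := by
      rw [← htp]; nlinarith
    calc (1 - p) ^ t + t * p * (1 - p) ^ (t - 1)
        ≤ (1 + (4 + 2 * L)) * (1 - p) ^ (t - 1) := this
      _ ≤ (5 + 2 * L) * Real.exp (-3 - 2 * L) := by nlinarith [Real.exp_pos (-3 - 2*L)]
  refine step.trans ?_
  have hA : (5 + 2 * L) ≤ Real.exp (3 + L) := by
    have he3 : (16:ℝ) ≤ Real.exp 3 := by
      have h := Real.exp_one_gt_d9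
      have hx : (2.7:ℝ) ≤ Real.exp 1 := by norm_num at h ⊢; linarith
      have hexp3 : Real.exp 3 = Real.exp 1 ^ 3 := by
        rw [← Real.exp_nat_mul]; norm_num
      have hsq : (2.7:ℝ)^2 ≤ (Real.exp 1)^2 := by nlinarith
      nlinarith [Real.exp_pos 1]
    have heL : 1 + L ≤ Real.exp L := by have := Real.add_one_le_exp L; linarith
    have : Real.exp (3 + L) = Real.exp 3 * Real.exp L := Real.exp_add 3 L
    nlinarith [Real.exp_pos L]
  have hsplit : Real.exp (-3 - 2 * L) = Real.exp (-L) * Real.exp (-(3 + L)) := by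
    rw [← Real.exp_add]; congr 1; ring
  rw [hsplit]
  have hmul : Real.exp (-(3 + L)) * Real.exp (3 + L) = 1 := by
    rw [← Real.exp_add, neg_add_cancel, Real.exp_zero]
  nlinarith [Real.exp_pos (-L), Real.exp_pos (-(3 + L)), Real.exp_pos (3 + L)]


lemma exists_index' {n d : ℕ} (hd : 0 < d) (a : Fin n) (T : Finset (Fin n))
    (haT : a ∉ T) (hT : T.card = d - 1) :
    ∃ i : Fin d → Fin n, Function.Injective i ∧ i ⟨0, hd⟩ = a ∧
      (∀ j, j ≠ (⟨0, hd⟩ : Fin d) → i j ∈ T) ∧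
      (∀ b ∈ T, ∃ j, j ≠ (⟨0, hd⟩ : Fin d) ∧ i j = b) := by
  set e := T.orderIsoOfFin hT with he
  refine ⟨fun j => if h : (j : ℕ) = 0 then a
    else (e ⟨(j : ℕ) - 1, by have h2 := j.2; omega⟩ : Fin n), ?_, ?_, ?_, ?_⟩
  · intro j j' hjj'
    simp only at hjj'
    by_cases h1 : (j : ℕ) = 0 <;> by_cases h2 : (j' : ℕ) = 0
    · exact Fin.ext (by omega)
    · rw [dif_pos h1, dif_neg h2] at hjj'
      exact absurd (hjj' ▸ (e _).2) haT
    · rw [dif_neg h1, dif_pos h2] at hjj'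
      exact absurd (hjj' ▸ (e _).2) haT
    · rw [dif_neg h1, dif_neg h2] at hjj'
      have := e.injective (Subtype.coe_injective hjj')
      have := Fin.mk.injEq _ _ _ _ ▸ this
      apply Fin.ext
      have h3 : (j : ℕ) - 1 = (j' : ℕ) - 1 := Fin.mk.inj_iff.mp (e.injective (Subtype.coe_injective hjj'))
      omega
  · exact dif_pos rfl
  · intro j hj
    have hj0 : (j : ℕ) ≠ 0 := fun h => hj (Fin.ext h)
    simp only
    rw [dif_neg hj0]
    exact (e _).2
  · intro b hb
    obtain ⟨m, hm⟩ := e.surjective ⟨b, hb⟩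
    refine ⟨⟨(m : ℕ) + 1, by have := m.2; omega⟩, ?_, ?_⟩
    · intro h
      have := Fin.mk.inj_iff.mp h
      omega
    · have h0 : (((⟨(m : ℕ) + 1, by have := m.2; omega⟩ : Fin d) : ℕ)) ≠ 0 := by simp
      refine Eq.trans (dif_neg h0) ?_
      have hmk : (⟨(m : ℕ) + 1 - 1, by have := m.2; omega⟩ : Fin (d-1)) = m := by
        apply Fin.ext; simp
      rw [hmk, hm]



open Classical in
/-- Let the rows of a random `t × n` binary matrix `S` be drawn i.i.d. from a
distribution `μ` on `{0,1}^n` which gives every event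
`{v : v_{i 0} = 1, v_{i j} = 0 (j ≠ 0)}` (for pairwise distinct indices `i 0, …,
i (d-1)`) probability `(4 + 2 ln(d·C(n,d)/ε))/t`.  With `B j = {k : S k j = 1}`, the
probability that some pairwise distinct indices `i 0, …, i (d-1)` satisfy
`|B (i 0) \ (B (i 1) ∪ ⋯ ∪ B (i (d-1)))| ≤ 1` is at most `ε`. -/
theorem prob_not_doubly_disjunct_le (n d t : ℕ) (hn : 0 < n) (hd : 0 < d) (ht : 0 < t)
    (hdn : d ≤ n) (ε : ℝ) (hε0 : 0 < ε) (hε1 : ε < 1)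
    (μ : (Fin n → Bool) → ℝ) (hμ0 : ∀ v, 0 ≤ μ v)
    (hμ1 : (∑ v : Fin n → Bool, μ v) = 1)
    (hμ : ∀ i : Fin d → Fin n, Function.Injective i →
      (∑ v ∈ Finset.univ.filter (fun v : Fin n → Bool =>
          v (i ⟨0, hd⟩) = true ∧ ∀ j : Fin d, j ≠ ⟨0, hd⟩ → v (i j) = false),
        μ v) = (4 + 2 * Real.log (d * n.choose d / ε)) / t) :
    (∑ S : Fin t → Fin n → Bool,
      if ∃ i : Fin d → Fin n, Function.Injective i ∧
          ((Finset.univ.filter fun k => S k (i ⟨0, hd⟩) = true) \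
            Finset.univ.biUnion (fun j : Fin d =>
              if j = ⟨0, hd⟩ then ∅
              else Finset.univ.filter fun k => S k (i j) = true)).card ≤ 1
      then ∏ k : Fin t, μ (S k) else 0) ≤ ε := by
  have hM1 : (1:ℝ) ≤ (d:ℝ) * (n.choose d : ℝ) := by
    have h1 : 1 ≤ d * n.choose d :=
      Nat.one_le_iff_ne_zero.mpr (Nat.mul_ne_zero hd.ne' (Nat.choose_pos hdn).ne')
    exact_mod_cast h1
  have hMpos : (0:ℝ) < (d:ℝ) * (n.choose d : ℝ) := lt_of_lt_of_le zero_lt_one hM1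
  have hL : (0:ℝ) < Real.log (d * n.choose d / ε) :=
    Real.log_pos ((one_lt_div hε0).mpr (lt_of_lt_of_le hε1 hM1))
  set L : ℝ := Real.log (d * n.choose d / ε) with hLdef
  set p : ℝ := (4 + 2 * L) / t with hpdef
  have hwnn : ∀ S : Fin t → Fin n → Bool, 0 ≤ ∏ k : Fin t, μ (S k) :=
    fun S => Finset.prod_nonneg fun k _ => hμ0 _
  -- per-class measure
  have hμsum : ∀ (a : Fin n) (T : Finset (Fin n)), a ∉ T → T.card = d - 1 →
      (∑ v ∈ Finset.univ.filter
          (fun v : Fin n → Bool => v a = true ∧ ∀ b ∈ T, v b = false), μ v) = p := by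
    intro a T haT hT
    obtain ⟨i, hinj, hi0, hmem, hsurj⟩ := exists_index' hd a T haT hT
    rw [← hμ i hinj]
    refine Finset.sum_congr ?_ (fun _ _ => rfl)
    refine Finset.filter_congr (fun v _ => ?_)
    rw [hi0]
    constructor
    · rintro ⟨h1, h2⟩
      exact ⟨h1, fun j hj => h2 (i j) (hmem j hj)⟩
    · rintro ⟨h1, h2⟩
      refine ⟨h1, fun b hb => ?_⟩
      obtain ⟨j, hj, rfl⟩ := hsurj b hb
      exact h2 j hj
  -- p bounds
  have hp0 : 0 ≤ p := by
    rw [hpdef]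
    exact div_nonneg (by linarith) (Nat.cast_nonneg t)
  have hp1 : p ≤ 1 := by
    have h := hμ (Fin.castLE hdn) (Fin.castLE_injective hdn)
    have hle : (∑ v ∈ Finset.univ.filter (fun v : Fin n → Bool =>
        v (Fin.castLE hdn ⟨0, hd⟩) = true ∧
          ∀ j : Fin d, j ≠ ⟨0, hd⟩ → v (Fin.castLE hdn j) = false), μ v)
        ≤ ∑ v : Fin n → Bool, μ v :=
      Finset.sum_le_sum_of_subset_of_nonneg (Finset.filter_subset _ _) (fun v _ _ => hμ0 v)
    rw [h, hμ1] at hle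
    exact hle
  have htp : (t:ℝ) * p = 4 + 2 * L := by
    rw [hpdef]
    field_simp
  have hnum : (1 - p) ^ t + t * p * (1 - p) ^ (t - 1) ≤ Real.exp (-L) :=
    numeric_bound' p hp0 hp1 t ht L hL htp
  have hexp : Real.exp (-L) = ε / ((d:ℝ) * n.choose d) := by
    rw [hLdef, Real.exp_neg, Real.exp_log (div_pos hMpos hε0), inv_div]
  -- union bound, pointwise in S
  have step1 : ∀ S : Fin t → Fin n → Bool,
      (if ∃ i : Fin d → Fin n, Function.Injective i ∧
          ((Finset.univ.filter fun k => S k (i ⟨0, hd⟩) = true) \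
            Finset.univ.biUnion (fun j : Fin d =>
              if j = ⟨0, hd⟩ then ∅
              else Finset.univ.filter fun k => S k (i j) = true)).card ≤ 1
        then ∏ k : Fin t, μ (S k) else 0)
      ≤ ∑ a : Fin n, ∑ T ∈ (Finset.univ.erase a).powersetCard (d - 1),
          (if (Finset.univ.filter fun k =>
              (S k a = true ∧ ∀ b ∈ T, S k b = false)).card ≤ 1
            then ∏ k : Fin t, μ (S k) else 0) := by
    intro S
    have hinn : ∀ a : Fin n, (0:ℝ) ≤ ∑ T ∈ (Finset.univ.erase a).powersetCard (d - 1),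
        (if (Finset.univ.filter fun k =>
            (S k a = true ∧ ∀ b ∈ T, S k b = false)).card ≤ 1
          then ∏ k : Fin t, μ (S k) else 0) := by
      intro a
      refine Finset.sum_nonneg fun T _ => ?_
      split_ifs
      · exact hwnn S
      · exact le_rfl
    by_cases hex : ∃ i : Fin d → Fin n, Function.Injective i ∧
        ((Finset.univ.filter fun k => S k (i ⟨0, hd⟩) = true) \
          Finset.univ.biUnion (fun j : Fin d =>
            if j = ⟨0, hd⟩ then ∅
            else Finset.univ.filter fun k => S k (i j) = true)).card ≤ 1
    · rw [if_pos hex]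
      obtain ⟨i, hinj, hcard⟩ := hex
      set a : Fin n := i ⟨0, hd⟩ with ha
      set T : Finset (Fin n) := (Finset.univ.erase (⟨0, hd⟩ : Fin d)).image i with hTdef
      have hTmem : T ∈ (Finset.univ.erase a).powersetCard (d - 1) := by
        rw [Finset.mem_powersetCard]
        constructor
        · intro b hb
          obtain ⟨j, hj, rfl⟩ := Finset.mem_image.mp hb
          have hjne := (Finset.mem_erase.mp hj).1
          exact Finset.mem_erase.mpr ⟨fun hh => hjne (hinj hh), Finset.mem_univ _⟩
        · rw [hTdef, Finset.card_image_of_injective _ hinj,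
            Finset.card_erase_of_mem (Finset.mem_univ _), Finset.card_univ, Fintype.card_fin]
      have hsets : ((Finset.univ.filter fun k => S k a = true) \
            Finset.univ.biUnion (fun j : Fin d =>
              if j = ⟨0, hd⟩ then ∅
              else Finset.univ.filter fun k => S k (i j) = true))
          = Finset.univ.filter (fun k => S k a = true ∧ ∀ b ∈ T, S k b = false) := by
        ext k
        simp only [Finset.mem_sdiff, Finset.mem_filter, Finset.mem_biUnion, Finset.mem_univ,
          true_and]
        constructor
        · rintro ⟨h1, h2⟩
          refine ⟨h1, fun b hb => ?_⟩
          obtain ⟨j, hj, rfl⟩ := Finset.mem_image.mp hb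
          have hjne := (Finset.mem_erase.mp hj).1
          by_contra hfalse
          exact h2 ⟨j, by
            rw [if_neg hjne]
            refine Finset.mem_filter.mpr ⟨Finset.mem_univ _, ?_⟩
            cases hx : S k (i j)
            · exact absurd hx hfalse
            · rfl⟩
        · rintro ⟨h1, h2⟩
          refine ⟨h1, ?_⟩
          rintro ⟨j, hj⟩
          by_cases hje : j = (⟨0, hd⟩ : Fin d)
          · rw [if_pos hje] at hj
            exact (Finset.notMem_empty k) hj
          · rw [if_neg hje] at hj
            have htrue := (Finset.mem_filter.mp hj).2
            have hmemT : i j ∈ T :=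
              Finset.mem_image.mpr ⟨j, Finset.mem_erase.mpr ⟨hje, Finset.mem_univ _⟩, rfl⟩
            have hcontr := h2 (i j) hmemT
            rw [htrue] at hcontr
            exact absurd hcontr (by simp)
      have hQ : (Finset.univ.filter fun k =>
          (S k a = true ∧ ∀ b ∈ T, S k b = false)).card ≤ 1 := by
        rw [← hsets]
        exact hcard
      have hstep : (∏ k : Fin t, μ (S k))
          ≤ ∑ T' ∈ (Finset.univ.erase a).powersetCard (d - 1),
            (if (Finset.univ.filter fun k =>
                (S k a = true ∧ ∀ b ∈ T', S k b = false)).card ≤ 1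
              then ∏ k : Fin t, μ (S k) else 0) := by
        have hle := Finset.single_le_sum
          (f := fun T' : Finset (Fin n) => if (Finset.univ.filter fun k =>
              (S k a = true ∧ ∀ b ∈ T', S k b = false)).card ≤ 1
            then ∏ k : Fin t, μ (S k) else 0)
          (fun T' _ => by
            split_ifs
            · exact hwnn S
            · exact le_rfl)
          hTmem
        simpa only [if_pos hQ] using hle
      refine hstep.trans ?_
      exact Finset.single_le_sum (fun a' _ => hinn a') (Finset.mem_univ a)
    · rw [if_neg hex]
      exact Finset.sum_nonneg fun a _ => hinn a
  -- put everything together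
  calc (∑ S : Fin t → Fin n → Bool,
      if ∃ i : Fin d → Fin n, Function.Injective i ∧
          ((Finset.univ.filter fun k => S k (i ⟨0, hd⟩) = true) \
            Finset.univ.biUnion (fun j : Fin d =>
              if j = ⟨0, hd⟩ then ∅
              else Finset.univ.filter fun k => S k (i j) = true)).card ≤ 1
      then ∏ k : Fin t, μ (S k) else 0)
      ≤ ∑ S : Fin t → Fin n → Bool, ∑ a : Fin n,
          ∑ T ∈ (Finset.univ.erase a).powersetCard (d - 1),
          (if (Finset.univ.filter fun k =>
              (S k a = true ∧ ∀ b ∈ T, S k b = false)).card ≤ 1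
            then ∏ k : Fin t, μ (S k) else 0) := Finset.sum_le_sum fun S _ => step1 S
    _ = ∑ a : Fin n, ∑ T ∈ (Finset.univ.erase a).powersetCard (d - 1),
          ∑ S : Fin t → Fin n → Bool,
          (if (Finset.univ.filter fun k =>
              (S k a = true ∧ ∀ b ∈ T, S k b = false)).card ≤ 1
            then ∏ k : Fin t, μ (S k) else 0) := by
        rw [Finset.sum_comm]
        exact Finset.sum_congr rfl fun a _ => Finset.sum_comm
    _ ≤ ∑ a : Fin n, ∑ T ∈ (Finset.univ.erase a).powersetCard (d - 1),
          (ε / ((d:ℝ) * n.choose d)) := by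
        refine Finset.sum_le_sum fun a _ => Finset.sum_le_sum fun T hT => ?_
        rw [Finset.mem_powersetCard] at hT
        have haT : a ∉ T := fun hmem =>
          (Finset.mem_erase.mp (hT.1 hmem)).1 rfl
        have hclass := class_bound' t μ hμ0 hμ1
          (fun v : Fin n → Bool => v a = true ∧ ∀ b ∈ T, v b = false) p
          (hμsum a T haT hT.2)
        refine le_trans hclass ?_
        rw [← hexp]
        exact hnum
    _ = ε := by
        have hcard : ∀ a : Fin n,
            ((Finset.univ.erase a).powersetCard (d - 1)).card = (n-1).choose (d-1) := by
          intro a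
          rw [Finset.card_powersetCard, Finset.card_erase_of_mem (Finset.mem_univ _),
            Finset.card_univ, Fintype.card_fin]
        have hcount : (n : ℝ) * ((n-1).choose (d-1) : ℝ) = (d:ℝ) * n.choose d := by
          have h := Nat.add_one_mul_choose_eq (n-1) (d-1)
          have h1 : n - 1 + 1 = n := by omega
          have h2 : d - 1 + 1 = d := by omega
          rw [h1, h2] at h
          have := congrArg (Nat.cast : ℕ → ℝ) h
          push_cast at this
          linarith
        simp only [Finset.sum_const, hcard, Finset.card_univ, Fintype.card_fin, nsmul_eq_mul]
        rw [← mul_assoc, hcount]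
        field_simp
        exact div_self (Nat.cast_ne_zero.mpr (Nat.choose_pos hdn).ne')
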